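/- arXiv:math/0607175 — 2 statements merged into one kernel-verified Lean document; each statement's English description precedes it below -/
import Mathlib

section
/- Let h₀ be a marginal tracial state (density matrix) on B ⊗ B with range projection R. Then h₀ is extremal in the convex set of marginal tracial states if and only if (R (B ⊗ B) R) ∩ V = {0}, where V = ker(P + Q). -/
open Matrix Kronecker
open scoped ComplexOrder

/-- The trace-preserving conditional expectation of `B ⊗ B` onto `B ⊗ I`:
`P(x ⊗ y) = τ(y) (x ⊗ I)`. -/
noncomputable def Pexp (n : ℕ) (m : Matrix (Fin n × Fin n) (Fin n × Fin n) ℂ) :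
    Matrix (Fin n × Fin n) (Fin n × Fin n) ℂ :=
  Matrix.of fun p q => if p.2 = q.2 then (∑ k, m (p.1, k) (q.1, k)) / n else 0

/-- The trace-preserving conditional expectation of `B ⊗ B` onto `I ⊗ B`:
`Q(x ⊗ y) = τ(x) (I ⊗ y)`. -/
noncomputable def Qexp (n : ℕ) (m : Matrix (Fin n × Fin n) (Fin n × Fin n) ℂ) :
    Matrix (Fin n × Fin n) (Fin n × Fin n) ℂ :=
  Matrix.of fun p q => if p.1 = q.1 then (∑ k, m (k, p.2) (k, q.2)) / n else 0

/-- A marginal tracial state, as a density matrix: positive with `P(h) = Q(h) = I`. -/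
def IsMTS (n : ℕ) (h : Matrix (Fin n × Fin n) (Fin n × Fin n) ℂ) : Prop :=
  h.PosSemidef ∧ Pexp n h = 1 ∧ Qexp n h = 1

/-- An extreme point of the convex set of marginal tracial states. -/
def IsExtremalMTS (n : ℕ) (h₀ : Matrix (Fin n × Fin n) (Fin n × Fin n) ℂ) : Prop :=
  IsMTS n h₀ ∧ ∀ (h₁ h₂ : Matrix (Fin n × Fin n) (Fin n × Fin n) ℂ) (t : ℝ),
    0 < t → t < 1 → IsMTS n h₁ → IsMTS n h₂ →
    h₀ = (t : ℂ) • h₁ + ((1 - t : ℝ) : ℂ) • h₂ → h₁ = h₀ ∧ h₂ = h₀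

section Helpers

lemma Pexp_add (n : ℕ) (a b : Matrix (Fin n × Fin n) (Fin n × Fin n) ℂ) :
    Pexp n (a + b) = Pexp n a + Pexp n b := by
  ext p q
  simp only [Pexp, Matrix.add_apply, Matrix.of_apply, Finset.sum_add_distrib, add_div]
  split <;> simp

lemma Qexp_add (n : ℕ) (a b : Matrix (Fin n × Fin n) (Fin n × Fin n) ℂ) :
    Qexp n (a + b) = Qexp n a + Qexp n b := by
  ext p q
  simp only [Qexp, Matrix.add_apply, Matrix.of_apply, Finset.sum_add_distrib, add_div]
  split <;> simp

lemma Pexp_sub (n : ℕ) (a b : Matrix (Fin n × Fin n) (Fin n × Fin n) ℂ) :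
    Pexp n (a - b) = Pexp n a - Pexp n b := by
  ext p q
  simp only [Pexp, Matrix.sub_apply, Matrix.of_apply, Finset.sum_sub_distrib, sub_div]
  split <;> simp

lemma Qexp_sub (n : ℕ) (a b : Matrix (Fin n × Fin n) (Fin n × Fin n) ℂ) :
    Qexp n (a - b) = Qexp n a - Qexp n b := by
  ext p q
  simp only [Qexp, Matrix.sub_apply, Matrix.of_apply, Finset.sum_sub_distrib, sub_div]
  split <;> simp

lemma Pexp_smul (n : ℕ) (c : ℂ) (a : Matrix (Fin n × Fin n) (Fin n × Fin n) ℂ) :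
    Pexp n (c • a) = c • Pexp n a := by
  ext p q
  simp only [Pexp, Matrix.smul_apply, Matrix.of_apply, smul_eq_mul, ← Finset.mul_sum, mul_div_assoc]
  split <;> simp

lemma Qexp_smul (n : ℕ) (c : ℂ) (a : Matrix (Fin n × Fin n) (Fin n × Fin n) ℂ) :
    Qexp n (c • a) = c • Qexp n a := by
  ext p q
  simp only [Qexp, Matrix.smul_apply, Matrix.of_apply, smul_eq_mul, ← Finset.mul_sum, mul_div_assoc]
  split <;> simp

lemma Pexp_conjTranspose (n : ℕ) (a : Matrix (Fin n × Fin n) (Fin n × Fin n) ℂ) :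
    Pexp n aᴴ = (Pexp n a)ᴴ := by
  ext p q
  simp only [Pexp, Matrix.conjTranspose_apply, Matrix.of_apply]
  by_cases h : p.2 = q.2
  · rw [if_pos h, if_pos h.symm, star_div₀, star_natCast, star_sum]
  · rw [if_neg h, if_neg (fun hh => h hh.symm), star_zero]

lemma Qexp_conjTranspose (n : ℕ) (a : Matrix (Fin n × Fin n) (Fin n × Fin n) ℂ) :
    Qexp n aᴴ = (Qexp n a)ᴴ := by
  ext p q
  simp only [Qexp, Matrix.conjTranspose_apply, Matrix.of_apply]
  by_cases h : p.1 = q.1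
  · rw [if_pos h, if_pos h.symm, star_div₀, star_natCast, star_sum]
  · rw [if_neg h, if_neg (fun hh => h hh.symm), star_zero]

lemma PQ_zero (n : ℕ) (hn : 0 < n) (v : Matrix (Fin n × Fin n) (Fin n × Fin n) ℂ)
    (hvz : Pexp n v + Qexp n v = 0) : Pexp n v = 0 ∧ Qexp n v = 0 := by
  set S : Fin n → Fin n → ℂ := fun a b => (∑ k, v (a, k) (b, k)) / n with hSdef
  set T : Fin n → Fin n → ℂ := fun c d => (∑ k, v (k, c) (k, d)) / n with hTdef
  have key : ∀ p q : Fin n × Fin n,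
      (if p.2 = q.2 then S p.1 q.1 else 0) + (if p.1 = q.1 then T p.2 q.2 else 0) = 0 := by
    intro p q
    have := congrFun (congrFun hvz p) q
    simpa [Pexp, Qexp, Matrix.add_apply, hSdef, hTdef] using this
  have i0 : Fin n := ⟨0, hn⟩
  have hS0 : ∀ a b : Fin n, a ≠ b → S a b = 0 := by
    intro a b hab
    have := key (a, i0) (b, i0)
    simpa [hab] using this
  have hT0 : ∀ c d : Fin n, c ≠ d → T c d = 0 := by
    intro c d hcd
    have := key (i0, c) (i0, d)
    simpa [hcd] using this
  have hdiag : ∀ a c : Fin n, S a a + T c c = 0 := by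
    intro a c
    have := key (a, c) (a, c)
    simpa using this
  have hsum : ∑ a, S a a = ∑ c, T c c := by
    simp only [hSdef, hTdef, ← Finset.sum_div]
    rw [Finset.sum_comm]
  have hSc : ∀ a, S a a = - T i0 i0 := fun a => by
    have := hdiag a i0; linear_combination this
  have hTc : ∀ c, T c c = - S i0 i0 := fun c => by
    have := hdiag i0 c; linear_combination this
  have hn' : (n : ℂ) ≠ 0 := Nat.cast_ne_zero.mpr hn.ne'
  have hST : S i0 i0 = T i0 i0 := by
    have h1 : ∑ a, S a a = n * (- T i0 i0) := by
      rw [Finset.sum_congr rfl fun a _ => hSc a]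
      simp [Finset.sum_const, mul_comm]
    have h2 : ∑ c, T c c = n * (- S i0 i0) := by
      rw [Finset.sum_congr rfl fun c _ => hTc c]
      simp [Finset.sum_const, mul_comm]
    have := hsum
    rw [h1, h2] at this
    have h3 := mul_left_cancel₀ hn' this
    linear_combination h3
  have hS00 : S i0 i0 = 0 := by
    have := hdiag i0 i0
    rw [← hST] at this
    linear_combination this / 2
  have hSaa : ∀ a, S a a = 0 := fun a => by rw [hSc a, ← hST, hS00, neg_zero]
  have hTcc : ∀ c, T c c = 0 := fun c => by rw [hTc c, hS00, neg_zero]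
  constructor
  · ext p q
    show (if p.2 = q.2 then S p.1 q.1 else 0) = 0
    by_cases h2 : p.2 = q.2
    · rw [if_pos h2]
      by_cases h1 : p.1 = q.1
      · rw [h1]; exact hSaa q.1
      · exact hS0 _ _ h1
    · rw [if_neg h2]
  · ext p q
    show (if p.1 = q.1 then T p.2 q.2 else 0) = 0
    by_cases h1 : p.1 = q.1
    · rw [if_pos h1]
      by_cases h2 : p.2 = q.2
      · rw [h2]; exact hTcc q.2
      · exact hT0 _ _ h2
    · rw [if_neg h1]

variable {ι : Type*} [Fintype ι] [DecidableEq ι]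

lemma eq_of_mulVec_eq {A B : Matrix ι ι ℂ} (h : ∀ x, A *ᵥ x = B *ᵥ x) : A = B := by
  have h2 : Matrix.toLin' A = Matrix.toLin' B := by
    apply LinearMap.ext
    intro x
    rw [Matrix.toLin'_apply, Matrix.toLin'_apply]
    exact h x
  exact Matrix.toLin'.injective h2

lemma psd_smul_real {M : Matrix ι ι ℂ} (hM : M.PosSemidef) {c : ℝ} (hc : 0 ≤ c) :
    ((c : ℂ) • M).PosSemidef := by
  refine Matrix.PosSemidef.of_dotProduct_mulVec_nonneg ?_ fun x => ?_
  · have := hM.1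
    unfold Matrix.IsHermitian at *
    rw [Matrix.conjTranspose_smul, this]
    congr 1
    simp
  · rw [Matrix.smul_mulVec, dotProduct_smul, smul_eq_mul]
    exact mul_nonneg (by exact_mod_cast Complex.zero_le_real.mpr hc) (hM.dotProduct_mulVec_nonneg x)

lemma herm_dotProduct_self_star {M : Matrix ι ι ℂ} (hM : M.IsHermitian) (x : ι → ℂ) :
    star (star x ⬝ᵥ M *ᵥ x) = star x ⬝ᵥ M *ᵥ x := by
  calc star (star x ⬝ᵥ M *ᵥ x) = star (M *ᵥ x) ⬝ᵥ x := by
        rw [Matrix.star_dotProduct]; simp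
    _ = (star x ᵥ* Mᴴ) ⬝ᵥ x := by rw [Matrix.star_mulVec]
    _ = star x ⬝ᵥ M *ᵥ x := by rw [hM.eq, Matrix.dotProduct_mulVec]

lemma abs_herm_form_le {M : Matrix ι ι ℂ} (x : ι → ℂ) :
    ‖star x ⬝ᵥ M *ᵥ x‖ ≤
      (∑ i, ∑ j, ‖M i j‖) * (star x ⬝ᵥ x).re := by
  set s : ℝ := (star x ⬝ᵥ x).re with hsdef
  have hs : s = ∑ k, Complex.normSq (x k) := by
    rw [hsdef]
    simp only [dotProduct, Pi.star_apply, Complex.star_def]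
    rw [Complex.re_sum]
    congr 1; ext k
    rw [mul_comm, Complex.mul_conj]
    simp
  have hterm : ∀ k, Complex.normSq (x k) ≤ s := by
    intro k
    rw [hs]
    exact Finset.single_le_sum (fun i _ => Complex.normSq_nonneg (x i)) (Finset.mem_univ k)
  have habs2 : ∀ i j : ι, ‖x i‖ * ‖x j‖ ≤ s := by
    intro i j
    nlinarith [hterm i, hterm j, Complex.sq_norm (x i), Complex.sq_norm (x j),
      sq_nonneg (‖x i‖ - ‖x j‖),
      norm_nonneg (x i), norm_nonneg (x j)]
  calc ‖star x ⬝ᵥ M *ᵥ x‖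
      = ‖∑ i, ∑ j, star (x i) * (M i j * x j)‖ := by
        simp [dotProduct, Matrix.mulVec, Finset.mul_sum]
    _ ≤ ∑ i, ∑ j, ‖star (x i) * (M i j * x j)‖ := by
        refine (norm_sum_le _ _).trans ?_
        exact Finset.sum_le_sum fun i _ => norm_sum_le _ _
    _ ≤ ∑ i, ∑ j, ‖M i j‖ * s := by
        refine Finset.sum_le_sum fun i _ => Finset.sum_le_sum fun j _ => ?_
        rw [norm_mul, norm_mul]
        have hstar : ‖star (x i)‖ = ‖x i‖ := by
          rw [Complex.star_def, Complex.norm_conj]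
        rw [hstar]
        calc ‖x i‖ * (‖M i j‖ * ‖x j‖)
            = ‖M i j‖ * (‖x i‖ * ‖x j‖) := by ring
          _ ≤ ‖M i j‖ * s :=
              mul_le_mul_of_nonneg_left (habs2 i j) (norm_nonneg _)
    _ = (∑ i, ∑ j, ‖M i j‖) * s := by
        rw [Finset.sum_mul]
        congr 1; ext i
        rw [Finset.sum_mul]

lemma smul_one_sub_psd {M : Matrix ι ι ℂ} (hM : M.IsHermitian) {C : ℝ}
    (hC : ∑ i, ∑ j, ‖M i j‖ ≤ C) :
    ((C : ℂ) • (1 : Matrix ι ι ℂ) - M).PosSemidef := by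
  refine Matrix.PosSemidef.of_dotProduct_mulVec_nonneg ?_ fun x => ?_
  · unfold Matrix.IsHermitian
    rw [Matrix.conjTranspose_sub, Matrix.conjTranspose_smul, hM.eq, Matrix.conjTranspose_one]
    congr 2
    simp
  · rw [Matrix.sub_mulVec, dotProduct_sub]
    set z := star x ⬝ᵥ M *ᵥ x with hz
    have hzre : z.im = 0 := by
      have := herm_dotProduct_self_star hM x
      rw [← hz] at this
      have h2 := congrArg Complex.im this
      simp only [Complex.star_def, Complex.conj_im] at h2
      linarith
    have h1 : star x ⬝ᵥ ((C : ℂ) • (1 : Matrix ι ι ℂ)) *ᵥ x = (C : ℂ) * (star x ⬝ᵥ x) := by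
      rw [Matrix.smul_mulVec, dotProduct_smul, smul_eq_mul, Matrix.one_mulVec]
    rw [h1]
    have hxx : (star x ⬝ᵥ x).im = 0 := by
      have := herm_dotProduct_self_star (Matrix.isHermitian_one (n := ι) (α := ℂ)) x
      rw [Matrix.one_mulVec] at this
      have h2 := congrArg Complex.im this
      simp only [Complex.star_def, Complex.conj_im] at h2
      linarith
    rw [Complex.le_def]
    constructor
    · simp only [Complex.sub_re, Complex.zero_re, Complex.mul_re, Complex.ofReal_re,
        Complex.ofReal_im, hxx, mul_zero, zero_mul, sub_zero]
      have hle : z.re ≤ ‖z‖ := Complex.re_le_norm z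
      have := abs_herm_form_le (M := M) x
      have hCs : (∑ i, ∑ j, ‖M i j‖) * (star x ⬝ᵥ x).re ≤ C * (star x ⬝ᵥ x).re := by
        apply mul_le_mul_of_nonneg_right hC
        have := dotProduct_star_self_nonneg x
        exact (Complex.le_def.mp this).1
      linarith
    · simp only [Complex.sub_im, Complex.zero_im, Complex.mul_im, Complex.ofReal_im,
        Complex.ofReal_re, hxx, hzre, mul_zero, zero_mul, add_zero, sub_zero]

lemma posdef_lower {g : Matrix ι ι ℂ} (hg : g.PosDef) [Nonempty ι] :
    ∃ δ : ℝ, 0 < δ ∧ (g - (δ : ℂ) • 1).PosSemidef := by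
  classical
  set δ : ℝ := Finset.univ.inf' Finset.univ_nonempty hg.1.eigenvalues with hδdef
  refine ⟨δ, ?_, ?_⟩
  · obtain ⟨i, _, hi⟩ := Finset.exists_mem_eq_inf' Finset.univ_nonempty hg.1.eigenvalues
    rw [hδdef, hi]
    exact hg.eigenvalues_pos i
  · have hspec := hg.1.spectral_theorem
    rw [Unitary.conjStarAlgAut_apply] at hspec
    set U : Matrix ι ι ℂ := (hg.1.eigenvectorUnitary : Matrix ι ι ℂ) with hU
    have hUU : U * star U = 1 := (Matrix.mem_unitaryGroup_iff).mp hg.1.eigenvectorUnitary.2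
    have key : g - (δ : ℂ) • 1 =
        U * Matrix.diagonal (fun i => ((hg.1.eigenvalues i - δ : ℝ) : ℂ)) * star U := by
      have h1 : (δ : ℂ) • (1 : Matrix ι ι ℂ) = U * ((δ : ℂ) • 1) * star U := by
        rw [Matrix.mul_smul, mul_one, Matrix.smul_mul, hUU]
      calc g - (δ : ℂ) • 1
          = U * Matrix.diagonal (RCLike.ofReal ∘ hg.1.eigenvalues) * star U
            - U * ((δ : ℂ) • 1) * star U := by rw [← hspec, ← h1]
        _ = U * (Matrix.diagonal (RCLike.ofReal ∘ hg.1.eigenvalues) - (δ : ℂ) • 1) * star U := by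
            rw [Matrix.mul_sub, Matrix.sub_mul]
        _ = U * Matrix.diagonal (fun i => ((hg.1.eigenvalues i - δ : ℝ) : ℂ)) * star U := by
            congr 1
            congr 1
            rw [← Matrix.diagonal_one, ← Matrix.diagonal_smul, Matrix.diagonal_sub]
            ext i
            simp [Complex.ofReal_sub]
    rw [key, Matrix.star_eq_conjTranspose (M := U)]
    apply Matrix.PosSemidef.mul_mul_conjTranspose_same
    rw [Matrix.posSemidef_diagonal_iff]
    intro i
    rw [Complex.zero_le_real]
    rw [sub_nonneg, hδdef]
    exact Finset.inf'_le _ (Finset.mem_univ i)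

end Helpers

theorem stmt11 (n : ℕ) (hn : 0 < n)
    (h₀ R : Matrix (Fin n × Fin n) (Fin n × Fin n) ℂ)
    (hmts : IsMTS n h₀)
    (hRherm : Rᴴ = R) (hRidem : R * R = R)
    (hRrange : LinearMap.range (Matrix.toLin' R) = LinearMap.range (Matrix.toLin' h₀)) :
    IsExtremalMTS n h₀ ↔
      ∀ v : Matrix (Fin n × Fin n) (Fin n × Fin n) ℂ,
        (∃ a, v = R * a * R) → Pexp n v + Qexp n v = 0 → v = 0 := by
  have hfinpos : Nonempty (Fin n) := ⟨⟨0, hn⟩⟩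
  have hpsd₀ : h₀.PosSemidef := hmts.1
  have hherm₀ : h₀.IsHermitian := hpsd₀.1
  -- R fixes h₀
  have hfix : ∀ x, R *ᵥ (h₀ *ᵥ x) = h₀ *ᵥ x := by
    intro x
    have hx : h₀ *ᵥ x ∈ LinearMap.range (Matrix.toLin' R) := by
      rw [hRrange]
      exact ⟨x, Matrix.toLin'_apply _ _⟩
    obtain ⟨y, hy⟩ := hx
    rw [Matrix.toLin'_apply] at hy
    rw [← hy, Matrix.mulVec_mulVec, hRidem]
  have hRh : R * h₀ = h₀ := by
    apply eq_of_mulVec_eq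
    intro x
    rw [← Matrix.mulVec_mulVec]
    exact hfix x
  have hhR : h₀ * R = h₀ := by
    have := congrArg Matrix.conjTranspose hRh
    rwa [Matrix.conjTranspose_mul, hRherm, hherm₀.eq] at this
  constructor
  · -- extremal → kernel trivial
    intro hext v hva hsum
    obtain ⟨a, hva⟩ := hva
    obtain ⟨hPv, hQv⟩ := PQ_zero n hn v hsum
    have hvR : R * v * R = v := by
      rw [hva, ← Matrix.mul_assoc, ← Matrix.mul_assoc, hRidem, Matrix.mul_assoc, Matrix.mul_assoc,
        hRidem, ← Matrix.mul_assoc]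
    have hvH : R * vᴴ * R = vᴴ := by
      have := congrArg Matrix.conjTranspose hvR
      rwa [Matrix.conjTranspose_mul, Matrix.conjTranspose_mul, hRherm, ← Matrix.mul_assoc] at this
    -- the core: any hermitian R-supported direction with zero marginals vanishes
    have hzero : ∀ w : Matrix (Fin n × Fin n) (Fin n × Fin n) ℂ, w.IsHermitian →
        R * w * R = w → Pexp n w = 0 → Qexp n w = 0 → w = 0 := by
      intro w hwherm hwR hPw hQw
      -- the auxiliary positive definite matrix g
      set g : Matrix (Fin n × Fin n) (Fin n × Fin n) ℂ := h₀ + (1 - R) with hgdef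
      have honeR : ((1 : Matrix (Fin n × Fin n) (Fin n × Fin n) ℂ) - R).PosSemidef := by
        have : (1 : Matrix (Fin n × Fin n) (Fin n × Fin n) ℂ) - R = (1 - R)ᴴ * (1 - R) := by
          rw [Matrix.conjTranspose_sub, Matrix.conjTranspose_one, hRherm, Matrix.mul_sub,
            Matrix.sub_mul, Matrix.sub_mul, hRidem]
          simp
        rw [this]
        exact Matrix.posSemidef_conjTranspose_mul_self _
      have hgPD : g.PosDef := by
        refine Matrix.PosDef.of_dotProduct_mulVec_pos ?_ ?_
        · unfold Matrix.IsHermitian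
          rw [hgdef, Matrix.conjTranspose_add, hherm₀.eq, honeR.1.eq]
        · intro x hx
          have ha : 0 ≤ star x ⬝ᵥ h₀ *ᵥ x := hpsd₀.dotProduct_mulVec_nonneg x
          have hb : 0 ≤ star x ⬝ᵥ (1 - R) *ᵥ x := honeR.dotProduct_mulVec_nonneg x
          have htot : star x ⬝ᵥ g *ᵥ x = star x ⬝ᵥ h₀ *ᵥ x + star x ⬝ᵥ (1 - R) *ᵥ x := by
            rw [hgdef, Matrix.add_mulVec, dotProduct_add]
          rcases lt_or_eq_of_le (add_nonneg ha hb) with h | h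
          · rw [htot]; exact h
          · exfalso
            have hsplit := (add_eq_zero_iff_of_nonneg ha hb).mp h.symm
            have hx0 : h₀ *ᵥ x = 0 := (hpsd₀.dotProduct_mulVec_zero_iff x).mp hsplit.1
            have hr0 : (1 - R) *ᵥ x = 0 := by
              have hRpsd : ((1 : Matrix (Fin n × Fin n) (Fin n × Fin n) ℂ) - R).PosSemidef :=
                honeR
              exact (hRpsd.dotProduct_mulVec_zero_iff x).mp hsplit.2
            have hxR : R *ᵥ x = x := by
              have := hr0
              rw [Matrix.sub_mulVec, Matrix.one_mulVec, sub_eq_zero] at this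
              exact this.symm
            have hxrange : x ∈ LinearMap.range (Matrix.toLin' h₀) := by
              rw [← hRrange]
              exact ⟨x, by rw [Matrix.toLin'_apply]; exact hxR⟩
            obtain ⟨z, hz⟩ := hxrange
            rw [Matrix.toLin'_apply] at hz
            have hxx : star x ⬝ᵥ x = 0 := by
              have hvm : star x ᵥ* h₀ = 0 := by
                have h2 : star (h₀ *ᵥ x) = star x ᵥ* h₀ᴴ := Matrix.star_mulVec _ _
                rw [hx0, star_zero, hherm₀.eq] at h2
                exact h2.symm
              have h3 : star x ⬝ᵥ h₀ *ᵥ z = 0 := by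
                rw [Matrix.dotProduct_mulVec, hvm, zero_dotProduct]
              rwa [hz] at h3
            exact hx (dotProduct_star_self_eq_zero.mp hxx)
      obtain ⟨δ, hδpos, hgδ⟩ := posdef_lower hgPD
      set C : ℝ := (∑ i, ∑ j, ‖w i j‖) + 1 with hCdef
      have hCpos : 0 < C := by
        have : 0 ≤ ∑ i, ∑ j, ‖w i j‖ :=
          Finset.sum_nonneg fun i _ => Finset.sum_nonneg fun j _ => norm_nonneg _
        rw [hCdef]; linarith
      set ε : ℝ := δ / C with hεdef
      have hεpos : 0 < ε := div_pos hδpos hCpos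
      have hεC : ε * C = δ := by
        rw [hεdef]; field_simp
      have habs : ∀ i j, ‖((ε : ℂ) • w) i j‖ = ε * ‖w i j‖ := by
        intro i j
        rw [Matrix.smul_apply, smul_eq_mul, norm_mul, Complex.norm_real, Real.norm_eq_abs,
          abs_of_pos hεpos]
      have hsumabs : ∑ i, ∑ j, ‖((ε : ℂ) • w) i j‖ ≤ δ := by
        calc ∑ i, ∑ j, ‖((ε : ℂ) • w) i j‖
            = ε * ∑ i, ∑ j, ‖w i j‖ := by
              rw [Finset.mul_sum]
              refine Finset.sum_congr rfl fun i _ => ?_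
              rw [Finset.mul_sum]
              exact Finset.sum_congr rfl fun j _ => habs i j
          _ ≤ ε * C := by
              apply mul_le_mul_of_nonneg_left _ hεpos.le
              rw [hCdef]; linarith
          _ = δ := hεC
      have hwsmul_herm : ((ε : ℂ) • w).IsHermitian := by
        unfold Matrix.IsHermitian
        rw [Matrix.conjTranspose_smul, hwherm.eq]
        congr 1
        simp
      have hwneg_herm : (-((ε : ℂ) • w)).IsHermitian := by
        unfold Matrix.IsHermitian
        rw [Matrix.conjTranspose_neg, hwsmul_herm.eq]
      have hsumabs' : ∑ i, ∑ j, ‖(-((ε : ℂ) • w)) i j‖ ≤ δ := by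
        calc ∑ i, ∑ j, ‖(-((ε : ℂ) • w)) i j‖
            = ∑ i, ∑ j, ‖((ε : ℂ) • w) i j‖ := by
              refine Finset.sum_congr rfl fun i _ => Finset.sum_congr rfl fun j _ => ?_
              rw [Matrix.neg_apply, norm_neg]
          _ ≤ δ := hsumabs
      have psdA : ((δ : ℂ) • 1 - (ε : ℂ) • w).PosSemidef := smul_one_sub_psd hwsmul_herm hsumabs
      have psdB : ((δ : ℂ) • 1 + (ε : ℂ) • w).PosSemidef := by
        have := smul_one_sub_psd hwneg_herm hsumabs'
        rwa [sub_neg_eq_add] at this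
      have hplus : (g + (ε : ℂ) • w).PosSemidef := by
        have := hgδ.add psdB
        have heq : g - (δ : ℂ) • 1 + ((δ : ℂ) • 1 + (ε : ℂ) • w) = g + (ε : ℂ) • w := by abel
        rwa [heq] at this
      have hminus : (g - (ε : ℂ) • w).PosSemidef := by
        have := hgδ.add psdA
        have heq : g - (δ : ℂ) • 1 + ((δ : ℂ) • 1 - (ε : ℂ) • w) = g - (ε : ℂ) • w := by abel
        rwa [heq] at this
      -- conjugating by R brings us back to h₀ ± ε w
      have h1R0 : R * (1 - R) = 0 := by
        rw [Matrix.mul_sub, mul_one, hRidem, sub_self]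
      have hRgR : R * g * R = h₀ := by
        calc R * g * R = (R * h₀ + R * (1 - R)) * R := by rw [hgdef, Matrix.mul_add]
          _ = (R * h₀) * R := by rw [h1R0, add_zero]
          _ = h₀ := by rw [hRh, hhR]
      have hconj : ∀ m : Matrix (Fin n × Fin n) (Fin n × Fin n) ℂ,
          m.PosSemidef → (R * m * R).PosSemidef := by
        intro m hm
        have := hm.mul_mul_conjTranspose_same R
        rwa [hRherm] at this
      have hRsmul : R * ((ε : ℂ) • w) * R = (ε : ℂ) • w := by
        rw [Matrix.mul_smul, Matrix.smul_mul, hwR]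
      have psd1 : (h₀ + (ε : ℂ) • w).PosSemidef := by
        have := hconj _ hplus
        rwa [Matrix.mul_add, Matrix.add_mul, hRgR, hRsmul] at this
      have psd2 : (h₀ - (ε : ℂ) • w).PosSemidef := by
        have := hconj _ hminus
        rwa [Matrix.mul_sub, Matrix.sub_mul, hRgR, hRsmul] at this
      -- both perturbations are marginal tracial states
      have mts1 : IsMTS n (h₀ + (ε : ℂ) • w) :=
        ⟨psd1, by rw [Pexp_add, Pexp_smul, hPw, smul_zero, add_zero, hmts.2.1],
          by rw [Qexp_add, Qexp_smul, hQw, smul_zero, add_zero, hmts.2.2]⟩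
      have mts2 : IsMTS n (h₀ - (ε : ℂ) • w) :=
        ⟨psd2, by rw [Pexp_sub, Pexp_smul, hPw, smul_zero, sub_zero, hmts.2.1],
          by rw [Qexp_sub, Qexp_smul, hQw, smul_zero, sub_zero, hmts.2.2]⟩
      have hcomb : h₀ = ((1/2 : ℝ) : ℂ) • (h₀ + (ε : ℂ) • w)
          + ((1 - (1/2 : ℝ) : ℝ) : ℂ) • (h₀ - (ε : ℂ) • w) := by
        push_cast
        module
      obtain ⟨heq1, _⟩ := hext.2 _ _ (1/2 : ℝ) (by norm_num) (by norm_num) mts1 mts2 hcomb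
      have : (ε : ℂ) • w = 0 := by
        have := heq1
        nth_rewrite 2 [← add_zero h₀] at this
        exact add_left_cancel this
      rcases smul_eq_zero.mp this with h | h
      · exact absurd h (by exact_mod_cast hεpos.ne')
      · exact h
    -- split v into hermitian and antihermitian parts
    set w₁ : Matrix (Fin n × Fin n) (Fin n × Fin n) ℂ := (2⁻¹ : ℂ) • (v + vᴴ) with hw1
    set w₂ : Matrix (Fin n × Fin n) (Fin n × Fin n) ℂ := (-(Complex.I) / 2) • (v - vᴴ) with hw2
    have hw1herm : w₁.IsHermitian := by
      unfold Matrix.IsHermitian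
      rw [hw1, Matrix.conjTranspose_smul, Matrix.conjTranspose_add,
        Matrix.conjTranspose_conjTranspose]
      rw [add_comm vᴴ v]
      congr 1
      simp
    have hw2herm : w₂.IsHermitian := by
      unfold Matrix.IsHermitian
      rw [hw2, Matrix.conjTranspose_smul, Matrix.conjTranspose_sub,
        Matrix.conjTranspose_conjTranspose]
      have h1 : star (-(Complex.I) / 2) = Complex.I / 2 := by
        rw [star_div₀, star_neg, Complex.star_def, Complex.conj_I, map_ofNat]
        ring
      rw [h1]
      have h2 : vᴴ - v = -(v - vᴴ) := by abel
      rw [h2, smul_neg, ← neg_smul]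
      congr 1
      ring
    have hw1R : R * w₁ * R = w₁ := by
      rw [hw1, Matrix.mul_smul, Matrix.smul_mul, Matrix.mul_add, Matrix.add_mul, hvR, hvH]
    have hw2R : R * w₂ * R = w₂ := by
      rw [hw2, Matrix.mul_smul, Matrix.smul_mul, Matrix.mul_sub, Matrix.sub_mul, hvR, hvH]
    have hPw1 : Pexp n w₁ = 0 := by
      rw [hw1, Pexp_smul, Pexp_add, Pexp_conjTranspose, hPv]
      simp
    have hQw1 : Qexp n w₁ = 0 := by
      rw [hw1, Qexp_smul, Qexp_add, Qexp_conjTranspose, hQv]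
      simp
    have hPw2 : Pexp n w₂ = 0 := by
      rw [hw2, Pexp_smul, Pexp_sub, Pexp_conjTranspose, hPv]
      simp
    have hQw2 : Qexp n w₂ = 0 := by
      rw [hw2, Qexp_smul, Qexp_sub, Qexp_conjTranspose, hQv]
      simp
    have h1 := hzero w₁ hw1herm hw1R hPw1 hQw1
    have h2 := hzero w₂ hw2herm hw2R hPw2 hQw2
    -- recover v = 0
    have hsum1 : v + vᴴ = 0 := by
      have := h1
      rw [hw1] at this
      rcases smul_eq_zero.mp this with h | h
      · norm_num at h
      · exact h
    have hsum2 : v - vᴴ = 0 := by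
      have := h2
      rw [hw2] at this
      rcases smul_eq_zero.mp this with h | h
      · rw [div_eq_zero_iff] at h
        rcases h with h | h
        · exact absurd h (by simp [Complex.I_ne_zero])
        · norm_num at h
      · exact h
    have : (2 : ℂ) • v = 0 := by
      have := congrArg₂ (· + ·) hsum1 hsum2
      simpa [two_smul] using this
    rcases smul_eq_zero.mp this with h | h
    · norm_num at h
    · exact h
  · -- kernel trivial → extremal
    intro hker
    refine ⟨hmts, ?_⟩
    intro h₁ h₂ t ht0 ht1 hm1 hm2 heq
    have key : ∀ (s : ℝ) (h' k : Matrix (Fin n × Fin n) (Fin n × Fin n) ℂ), 0 < s →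
        IsMTS n h' → k.PosSemidef → h₀ = (s : ℂ) • h' + k → h' = h₀ := by
      intro s h' k hs hmts' hkpsd heq'
      have hnull : ∀ x, h₀ *ᵥ x = 0 → h' *ᵥ x = 0 := by
        intro x hx
        have h0 : star x ⬝ᵥ h₀ *ᵥ x = 0 := by rw [hx, dotProduct_zero]
        have hsplit : (s : ℂ) * (star x ⬝ᵥ h' *ᵥ x) + star x ⬝ᵥ k *ᵥ x = 0 := by
          have : star x ⬝ᵥ h₀ *ᵥ x
              = (s : ℂ) * (star x ⬝ᵥ h' *ᵥ x) + star x ⬝ᵥ k *ᵥ x := by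
            rw [heq', Matrix.add_mulVec, dotProduct_add, Matrix.smul_mulVec,
              dotProduct_smul, smul_eq_mul]
          rw [← this, h0]
        have hnn1 : 0 ≤ (s : ℂ) * (star x ⬝ᵥ h' *ᵥ x) :=
          mul_nonneg (Complex.zero_le_real.mpr hs.le) (hmts'.1.dotProduct_mulVec_nonneg x)
        have hnn2 : 0 ≤ star x ⬝ᵥ k *ᵥ x := hkpsd.dotProduct_mulVec_nonneg x
        have hz := (add_eq_zero_iff_of_nonneg hnn1 hnn2).mp hsplit
        have hq : star x ⬝ᵥ h' *ᵥ x = 0 := by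
          rcases mul_eq_zero.mp hz.1 with h | h
          · exact absurd h (by exact_mod_cast hs.ne')
          · exact h
        exact (hmts'.1.dotProduct_mulVec_zero_iff x).mp hq
      have hmul : h' * (1 - R) = 0 := by
        apply eq_of_mulVec_eq
        intro x
        rw [← Matrix.mulVec_mulVec, Matrix.zero_mulVec]
        apply hnull
        rw [Matrix.mulVec_mulVec]
        have : h₀ * (1 - R) = 0 := by
          rw [Matrix.mul_sub, mul_one, hhR, sub_self]
        rw [this, Matrix.zero_mulVec]
      have h'R : h' * R = h' := by
        have := hmul
        rw [Matrix.mul_sub, mul_one, sub_eq_zero] at this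
        exact this.symm
      have Rh' : R * h' = h' := by
        have := congrArg Matrix.conjTranspose h'R
        rwa [Matrix.conjTranspose_mul, hRherm, hmts'.1.1.eq] at this
      have hv0 : h' - h₀ = 0 := by
        apply hker (h' - h₀)
        · have e1 : R * h' * R = h' := by rw [Rh', h'R]
          have e2 : R * h₀ * R = h₀ := by rw [hRh, hhR]
          exact ⟨h' - h₀, by rw [Matrix.mul_sub, Matrix.sub_mul, e1, e2]⟩
        · rw [Pexp_sub, Qexp_sub, hmts'.2.1, hmts.2.1, hmts'.2.2, hmts.2.2]
          simp
      exact sub_eq_zero.mp hv0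
    have hres1 : h₁ = h₀ := by
      apply key t h₁ (((1 - t : ℝ) : ℂ) • h₂) ht0 hm1
      · exact psd_smul_real hm2.1 (by linarith)
      · exact heq
    have hres2 : h₂ = h₀ := by
      apply key (1 - t) h₂ ((t : ℂ) • h₀) (by linarith) hm2
      · exact psd_smul_real hmts.1 ht0.le
      · rw [hres1] at heq
        rw [add_comm ((t : ℂ) • h₀)] at heq
        exact heq
    exact ⟨hres1, hres2⟩
end

section
/- Let P, Q be the conditional expectations of B ⊗ B onto B ⊗ I and I ⊗ B. Then (P - Q)² is the orthogonal projection of the Hilbert space B ⊗ B (with Hilbert–Schmidt inner product) onto N ⊗ I + I ⊗ N, and consequently I - (P-Q)² is the orthogonal projection onto ℂI + N ⊗ N. -/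
open Matrix Kronecker
open scoped ComplexOrder

/-- `(P - Q)²` as a map on `B ⊗ B`. -/
noncomputable def PQsq (n : ℕ) (m : Matrix (Fin n × Fin n) (Fin n × Fin n) ℂ) :
    Matrix (Fin n × Fin n) (Fin n × Fin n) ℂ :=
  Pexp n (Pexp n m - Qexp n m) - Qexp n (Pexp n m - Qexp n m)

noncomputable def Lmar (n : ℕ) (m : Matrix (Fin n × Fin n) (Fin n × Fin n) ℂ) :
    Matrix (Fin n) (Fin n) ℂ :=
  Matrix.of fun i j => (∑ k, m (i, k) (j, k)) / n

noncomputable def Rmar (n : ℕ) (m : Matrix (Fin n × Fin n) (Fin n × Fin n) ℂ) :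
    Matrix (Fin n) (Fin n) ℂ :=
  Matrix.of fun i j => (∑ k, m (k, i) (k, j)) / n

lemma Pexp_eq_kron (n : ℕ) (m : Matrix (Fin n × Fin n) (Fin n × Fin n) ℂ) :
    Pexp n m = Lmar n m ⊗ₖ (1 : Matrix (Fin n) (Fin n) ℂ) := by
  ext p q
  simp only [Pexp, Lmar, Matrix.of_apply, kroneckerMap_apply, Matrix.one_apply, mul_ite, mul_one,
    mul_zero]

lemma Qexp_eq_kron (n : ℕ) (m : Matrix (Fin n × Fin n) (Fin n × Fin n) ℂ) :
    Qexp n m = (1 : Matrix (Fin n) (Fin n) ℂ) ⊗ₖ Rmar n m := by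
  ext p q
  simp only [Qexp, Rmar, Matrix.of_apply, kroneckerMap_apply, Matrix.one_apply, ite_mul, one_mul,
    zero_mul]

lemma Lmar_sub (n : ℕ) (a b : Matrix (Fin n × Fin n) (Fin n × Fin n) ℂ) :
    Lmar n (a - b) = Lmar n a - Lmar n b := by
  ext i j
  simp [Lmar, Finset.sum_sub_distrib, sub_div]

lemma Rmar_sub (n : ℕ) (a b : Matrix (Fin n × Fin n) (Fin n × Fin n) ℂ) :
    Rmar n (a - b) = Rmar n a - Rmar n b := by
  ext i j
  simp [Rmar, Finset.sum_sub_distrib, sub_div]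

lemma Lmar_kron (n : ℕ) (x y : Matrix (Fin n) (Fin n) ℂ) :
    Lmar n (x ⊗ₖ y) = (y.trace / n) • x := by
  ext i j
  simp only [Lmar, Matrix.of_apply, kroneckerMap_apply, Matrix.smul_apply, smul_eq_mul,
    Matrix.trace, Matrix.diag, ← Finset.mul_sum]
  ring

lemma Rmar_kron (n : ℕ) (x y : Matrix (Fin n) (Fin n) ℂ) :
    Rmar n (x ⊗ₖ y) = (x.trace / n) • y := by
  ext i j
  simp only [Rmar, Matrix.of_apply, kroneckerMap_apply, Matrix.smul_apply, smul_eq_mul,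
    Matrix.trace, Matrix.diag, ← Finset.sum_mul]
  ring

lemma trace_Lmar (n : ℕ) (m : Matrix (Fin n × Fin n) (Fin n × Fin n) ℂ) :
    (Lmar n m).trace = m.trace / n := by
  simp [Lmar, Matrix.trace, Matrix.diag, Fintype.sum_prod_type, Finset.sum_div]

lemma trace_Rmar (n : ℕ) (m : Matrix (Fin n × Fin n) (Fin n × Fin n) ℂ) :
    (Rmar n m).trace = m.trace / n := by
  simp only [Rmar, Matrix.trace, Matrix.diag, Matrix.of_apply, Fintype.sum_prod_type,
    ← Finset.sum_div]
  rw [Finset.sum_comm]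

lemma sub_kron {l : ℕ} (a b : Matrix (Fin l) (Fin l) ℂ) (c : Matrix (Fin l) (Fin l) ℂ) :
    (a - b) ⊗ₖ c = a ⊗ₖ c - b ⊗ₖ c := by
  ext p q; simp [kroneckerMap_apply, sub_mul]

lemma kron_sub {l : ℕ} (a : Matrix (Fin l) (Fin l) ℂ) (b c : Matrix (Fin l) (Fin l) ℂ) :
    a ⊗ₖ (b - c) = a ⊗ₖ b - a ⊗ₖ c := by
  ext p q; simp [kroneckerMap_apply, mul_sub]

lemma PQsq_eq (n : ℕ) (hn : (n : ℂ) ≠ 0) (m : Matrix (Fin n × Fin n) (Fin n × Fin n) ℂ) :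
    PQsq n m = (Lmar n m - (m.trace / (n : ℂ)^2) • 1) ⊗ₖ (1 : Matrix (Fin n) (Fin n) ℂ)
      + (1 : Matrix (Fin n) (Fin n) ℂ) ⊗ₖ (Rmar n m - (m.trace / (n : ℂ)^2) • 1) := by
  have h1 : (1 : Matrix (Fin n) (Fin n) ℂ).trace = (n : ℂ) := by simp
  unfold PQsq
  rw [Pexp_eq_kron n m, Qexp_eq_kron n m, Pexp_eq_kron, Qexp_eq_kron, Lmar_sub, Rmar_sub,
    Lmar_kron, Lmar_kron, Rmar_kron, Rmar_kron, trace_Lmar, trace_Rmar, h1]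
  simp only [sub_kron, kron_sub, Matrix.smul_kronecker, Matrix.kronecker_smul]
  match_scalars <;> (field_simp; try ring)

lemma PQsq_add (n : ℕ) (a b : Matrix (Fin n × Fin n) (Fin n × Fin n) ℂ) :
    PQsq n (a + b) = PQsq n a + PQsq n b := by
  unfold PQsq
  rw [Pexp_add, Qexp_add]
  rw [show Pexp n a + Pexp n b - (Qexp n a + Qexp n b)
      = (Pexp n a - Qexp n a) + (Pexp n b - Qexp n b) by abel, Pexp_add, Qexp_add]
  abel

lemma PQsq_smul (n : ℕ) (c : ℂ) (a : Matrix (Fin n × Fin n) (Fin n × Fin n) ℂ) :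
    PQsq n (c • a) = c • PQsq n a := by
  unfold PQsq
  rw [Pexp_smul, Qexp_smul, ← smul_sub, Pexp_smul, Qexp_smul, ← smul_sub]

lemma tri_swap {α : Type*} [Fintype α] (g : α → α → α → ℂ) :
    ∑ a, ∑ b, ∑ c, g a b c = ∑ a, ∑ b, ∑ c, g c b a := by
  have key : ∀ (h : α → α → α → ℂ),
      ∑ a, ∑ b, ∑ c, h a b c = ∑ p : α × α × α, h p.1 p.2.1 p.2.2 := by
    intro h; simp [Fintype.sum_prod_type]
  rw [key, key]
  exact Fintype.sum_equiv ⟨fun p => (p.2.2, p.2.1, p.1), fun p => (p.2.2, p.2.1, p.1),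
    fun p => rfl, fun p => rfl⟩ _ _ (fun p => rfl)

lemma Pexp_adj (n : ℕ) (a b : Matrix (Fin n × Fin n) (Fin n × Fin n) ℂ) :
    (bᴴ * Pexp n a).trace = ((Pexp n b)ᴴ * a).trace := by
  simp only [Matrix.trace, Matrix.diag, Matrix.mul_apply, Matrix.conjTranspose_apply, Pexp,
    Matrix.of_apply, Fintype.sum_prod_type, apply_ite (star : ℂ → ℂ), star_div₀, star_sum,
    star_zero, star_natCast, mul_ite, ite_mul, mul_zero, zero_mul,
    Finset.sum_ite_eq, Finset.sum_ite_eq', Finset.mem_univ, if_true,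
    Finset.sum_div, Finset.mul_sum, Finset.sum_mul, div_mul_eq_mul_div, mul_div_assoc]
  exact Finset.sum_congr rfl fun x _ => tri_swap _

lemma quad_swap {α : Type*} [Fintype α] (g : α → α → α → α → ℂ) :
    ∑ a, ∑ b, ∑ c, ∑ d, g a b c d = ∑ a, ∑ b, ∑ c, ∑ d, g d b c a := by
  have key : ∀ (h : α → α → α → α → ℂ),
      ∑ a, ∑ b, ∑ c, ∑ d, h a b c d = ∑ p : α × α × α × α, h p.1 p.2.1 p.2.2.1 p.2.2.2 := by
    intro h; simp [Fintype.sum_prod_type]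
  rw [key, key]
  exact Fintype.sum_equiv ⟨fun p => (p.2.2.2, p.2.1, p.2.2.1, p.1),
    fun p => (p.2.2.2, p.2.1, p.2.2.1, p.1), fun p => rfl, fun p => rfl⟩ _ _ (fun p => rfl)

lemma Qexp_adj (n : ℕ) (a b : Matrix (Fin n × Fin n) (Fin n × Fin n) ℂ) :
    (bᴴ * Qexp n a).trace = ((Qexp n b)ᴴ * a).trace := by
  simp only [Matrix.trace, Matrix.diag, Matrix.mul_apply, Matrix.conjTranspose_apply, Qexp,
    Matrix.of_apply, Fintype.sum_prod_type, apply_ite (star : ℂ → ℂ), star_div₀, star_sum,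
    star_zero, star_natCast, mul_ite, ite_mul, mul_zero, zero_mul,
    Finset.sum_ite_eq, Finset.sum_ite_eq', Finset.mem_univ, if_true,
    Finset.sum_div, Finset.mul_sum, Finset.sum_mul, div_mul_eq_mul_div, mul_div_assoc,
    Finset.sum_ite_irrel, Finset.sum_const_zero]
  exact quad_swap fun x x1 x2 x3 => star (b (x, x2) (x, x1)) * (a (x3, x2) (x3, x1) / n)

lemma PQsq_adj (n : ℕ) (a b : Matrix (Fin n × Fin n) (Fin n × Fin n) ℂ) :
    (bᴴ * PQsq n a).trace = ((PQsq n b)ᴴ * a).trace := by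
  have key : ∀ x y : Matrix (Fin n × Fin n) (Fin n × Fin n) ℂ,
      (yᴴ * (Pexp n x - Qexp n x)).trace = ((Pexp n y - Qexp n y)ᴴ * x).trace := by
    intro x y
    rw [Matrix.mul_sub, Matrix.trace_sub, Pexp_adj, Qexp_adj, Matrix.conjTranspose_sub,
      Matrix.sub_mul, Matrix.trace_sub]
  unfold PQsq
  rw [key (Pexp n a - Qexp n a) b, key a (Pexp n b - Qexp n b)]

lemma one_eq_kron (n : ℕ) : (1 : Matrix (Fin n × Fin n) (Fin n × Fin n) ℂ)
    = (1 : Matrix (Fin n) (Fin n) ℂ) ⊗ₖ (1 : Matrix (Fin n) (Fin n) ℂ) :=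
  (Matrix.one_kronecker_one).symm

lemma trace_big_one (n : ℕ) : (1 : Matrix (Fin n × Fin n) (Fin n × Fin n) ℂ).trace
    = (n : ℂ)^2 := by
  simp [Matrix.trace_one]; ring

lemma PQsq_one (n : ℕ) (hn : (n : ℂ) ≠ 0) :
    PQsq n (1 : Matrix (Fin n × Fin n) (Fin n × Fin n) ℂ) = 0 := by
  rw [PQsq_eq n hn, trace_big_one]
  rw [show (1 : Matrix (Fin n × Fin n) (Fin n × Fin n) ℂ)
      = (1 : Matrix (Fin n) (Fin n) ℂ) ⊗ₖ 1 from one_eq_kron n] 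
  rw [Lmar_kron, Rmar_kron, Matrix.trace_one]
  have : ((n : ℂ) / n) • (1 : Matrix (Fin n) (Fin n) ℂ) - ((n:ℂ)^2 / (n:ℂ)^2) • 1 = 0 := by
    rw [div_self hn, div_self (pow_ne_zero 2 hn)]; simp
  simp [Fintype.card_fin, this]

lemma PQsq_kron_traceless (n : ℕ) (hn : (n : ℂ) ≠ 0) (x y : Matrix (Fin n) (Fin n) ℂ)
    (hx : x.trace = 0) (hy : y.trace = 0) : PQsq n (x ⊗ₖ y) = 0 := by
  rw [PQsq_eq n hn, Lmar_kron, Rmar_kron, Matrix.trace_kronecker, hx, hy]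
  simp

lemma PQsq_xI (n : ℕ) (hn : (n : ℂ) ≠ 0) (x : Matrix (Fin n) (Fin n) ℂ) (hx : x.trace = 0) :
    PQsq n (x ⊗ₖ (1 : Matrix (Fin n) (Fin n) ℂ)) = x ⊗ₖ 1 := by
  rw [PQsq_eq n hn, Lmar_kron, Rmar_kron, Matrix.trace_kronecker, hx, Matrix.trace_one]
  simp [div_self hn, Fintype.card_fin]

lemma PQsq_Iy (n : ℕ) (hn : (n : ℂ) ≠ 0) (y : Matrix (Fin n) (Fin n) ℂ) (hy : y.trace = 0) :
    PQsq n ((1 : Matrix (Fin n) (Fin n) ℂ) ⊗ₖ y) = 1 ⊗ₖ y := by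
  rw [PQsq_eq n hn, Lmar_kron, Rmar_kron, Matrix.trace_kronecker, hy, Matrix.trace_one]
  simp [div_self hn, Fintype.card_fin]

lemma resid_kron (n : ℕ) (hn : (n : ℂ) ≠ 0) (a b : Matrix (Fin n) (Fin n) ℂ) :
    a ⊗ₖ b - PQsq n (a ⊗ₖ b) - ((a ⊗ₖ b).trace / (n : ℂ)^2) • 1
      = (a - (a.trace / n) • 1) ⊗ₖ (b - (b.trace / n) • 1) := by
  rw [PQsq_eq n hn, Lmar_kron, Rmar_kron, Matrix.trace_kronecker, one_eq_kron]
  simp only [sub_kron, kron_sub, Matrix.smul_kronecker, Matrix.kronecker_smul]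
  match_scalars <;> (field_simp; try ring)

noncomputable def resid (n : ℕ) : Matrix (Fin n × Fin n) (Fin n × Fin n) ℂ
    →ₗ[ℂ] Matrix (Fin n × Fin n) (Fin n × Fin n) ℂ where
  toFun m := m - PQsq n m - (m.trace / (n : ℂ)^2) • 1
  map_add' a b := by
    rw [PQsq_add, Matrix.trace_add]
    match_scalars <;> ring
  map_smul' c a := by
    rw [PQsq_smul, Matrix.trace_smul, RingHom.id_apply, smul_eq_mul]
    match_scalars <;> ring

lemma std_kron (n : ℕ) (i j k l : Fin n) :
    Matrix.single (i, j) (k, l) (1 : ℂ)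
      = Matrix.single i k (1 : ℂ) ⊗ₖ Matrix.single j l (1 : ℂ) := by
  ext p q
  simp only [Matrix.single, Matrix.of_apply, kroneckerMap_apply, Prod.mk.injEq,
    ite_mul, one_mul, zero_mul, mul_ite, mul_one, mul_zero]
  rcases p with ⟨p1, p2⟩; rcases q with ⟨q1, q2⟩
  by_cases h1 : i = p1 <;> by_cases h2 : k = q1 <;> by_cases h3 : j = p2 <;>
    by_cases h4 : l = q2 <;> simp [h1, h2, h3, h4, Prod.ext_iff, and_assoc]

lemma traceless_sub (n : ℕ) (hn : (n : ℂ) ≠ 0) (a : Matrix (Fin n) (Fin n) ℂ) :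
    (a - (a.trace / n) • 1).trace = 0 := by
  rw [Matrix.trace_sub, Matrix.trace_smul, Matrix.trace_one]
  simp only [Fintype.card_fin, smul_eq_mul]
  field_simp
  ring

lemma resid_mem (n : ℕ) (hn : (n : ℂ) ≠ 0) (m : Matrix (Fin n × Fin n) (Fin n × Fin n) ℂ) :
    m - PQsq n m - (m.trace / (n : ℂ)^2) • 1 ∈
      Submodule.span ℂ {w : Matrix (Fin n × Fin n) (Fin n × Fin n) ℂ |
        ∃ x y : Matrix (Fin n) (Fin n) ℂ, x.trace = 0 ∧ y.trace = 0 ∧ w = x ⊗ₖ y} := by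
  have : m - PQsq n m - (m.trace / (n : ℂ)^2) • 1 = resid n m := rfl
  rw [this, matrix_eq_sum_single m, map_sum]
  refine Submodule.sum_mem _ fun p _ => ?_
  rw [map_sum]
  refine Submodule.sum_mem _ fun q _ => ?_
  have h1 : Matrix.single p q (m p q) = (m p q) • Matrix.single p q (1 : ℂ) := by
    rw [Matrix.smul_single, smul_eq_mul, mul_one]
  rw [h1, _root_.map_smul]
  refine Submodule.smul_mem _ _ ?_
  rcases p with ⟨i, j⟩; rcases q with ⟨k, l⟩
  rw [std_kron]
  have h2 : resid n (Matrix.single i k (1:ℂ) ⊗ₖ Matrix.single j l (1:ℂ))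
      = (Matrix.single i k (1:ℂ) - ((Matrix.single i k (1:ℂ)).trace / n) • 1)
        ⊗ₖ (Matrix.single j l (1:ℂ) - ((Matrix.single j l (1:ℂ)).trace / n) • 1) :=
    resid_kron n hn _ _
  rw [h2]
  exact Submodule.subset_span ⟨_, _, traceless_sub n hn _, traceless_sub n hn _, rfl⟩

/-- `(P - Q)²` is the Hilbert–Schmidt orthogonal projection of `B ⊗ B` onto
`N ⊗ I + I ⊗ N`, and hence `I - (P - Q)²` is the orthogonal projection onto `ℂI + N ⊗ N`. -/
theorem stmt17 (n : ℕ) (hn : 0 < n) :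
    (∀ m, PQsq n (PQsq n m) = PQsq n m) ∧
    (∀ a b : Matrix (Fin n × Fin n) (Fin n × Fin n) ℂ,
      (bᴴ * PQsq n a).trace / ((n : ℂ)^2) = ((PQsq n b)ᴴ * a).trace / ((n : ℂ)^2)) ∧
    (∀ m, ∃ x y : Matrix (Fin n) (Fin n) ℂ, x.trace = 0 ∧ y.trace = 0 ∧
      PQsq n m = x ⊗ₖ (1 : Matrix (Fin n) (Fin n) ℂ) + (1 : Matrix (Fin n) (Fin n) ℂ) ⊗ₖ y) ∧
    (∀ x y : Matrix (Fin n) (Fin n) ℂ, x.trace = 0 → y.trace = 0 →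
      PQsq n (x ⊗ₖ (1 : Matrix (Fin n) (Fin n) ℂ) + (1 : Matrix (Fin n) (Fin n) ℂ) ⊗ₖ y)
        = x ⊗ₖ (1 : Matrix (Fin n) (Fin n) ℂ) + (1 : Matrix (Fin n) (Fin n) ℂ) ⊗ₖ y) ∧
    (∀ m, ∃ (c : ℂ) (v : Matrix (Fin n × Fin n) (Fin n × Fin n) ℂ),
      v ∈ Submodule.span ℂ {w : Matrix (Fin n × Fin n) (Fin n × Fin n) ℂ |
        ∃ x y : Matrix (Fin n) (Fin n) ℂ, x.trace = 0 ∧ y.trace = 0 ∧ w = x ⊗ₖ y} ∧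
      m - PQsq n m = c • (1 : Matrix (Fin n × Fin n) (Fin n × Fin n) ℂ) + v) ∧
    (∀ (c : ℂ) (v : Matrix (Fin n × Fin n) (Fin n × Fin n) ℂ),
      v ∈ Submodule.span ℂ {w : Matrix (Fin n × Fin n) (Fin n × Fin n) ℂ |
        ∃ x y : Matrix (Fin n) (Fin n) ℂ, x.trace = 0 ∧ y.trace = 0 ∧ w = x ⊗ₖ y} →
      let z := c • (1 : Matrix (Fin n × Fin n) (Fin n × Fin n) ℂ) + v
      z - PQsq n z = z) := by
  have hn' : (n : ℂ) ≠ 0 := Nat.cast_ne_zero.mpr hn.ne'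
  have part3 : ∀ m, ∃ x y : Matrix (Fin n) (Fin n) ℂ, x.trace = 0 ∧ y.trace = 0 ∧
      PQsq n m = x ⊗ₖ (1 : Matrix (Fin n) (Fin n) ℂ) + (1 : Matrix (Fin n) (Fin n) ℂ) ⊗ₖ y := by
    intro m
    refine ⟨Lmar n m - (m.trace / (n:ℂ)^2) • 1, Rmar n m - (m.trace / (n:ℂ)^2) • 1,
      ?_, ?_, PQsq_eq n hn' m⟩
    · rw [Matrix.trace_sub, Matrix.trace_smul, trace_Lmar, Matrix.trace_one]
      simp only [Fintype.card_fin, smul_eq_mul]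
      field_simp; ring
    · rw [Matrix.trace_sub, Matrix.trace_smul, trace_Rmar, Matrix.trace_one]
      simp only [Fintype.card_fin, smul_eq_mul]
      field_simp; ring
  have part4 : ∀ x y : Matrix (Fin n) (Fin n) ℂ, x.trace = 0 → y.trace = 0 →
      PQsq n (x ⊗ₖ (1 : Matrix (Fin n) (Fin n) ℂ) + (1 : Matrix (Fin n) (Fin n) ℂ) ⊗ₖ y)
        = x ⊗ₖ (1 : Matrix (Fin n) (Fin n) ℂ) + (1 : Matrix (Fin n) (Fin n) ℂ) ⊗ₖ y := by
    intro x y hx hy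
    rw [PQsq_add, PQsq_xI n hn' x hx, PQsq_Iy n hn' y hy]
  have pqzero : ∀ v, v ∈ Submodule.span ℂ {w : Matrix (Fin n × Fin n) (Fin n × Fin n) ℂ |
      ∃ x y : Matrix (Fin n) (Fin n) ℂ, x.trace = 0 ∧ y.trace = 0 ∧ w = x ⊗ₖ y} →
      PQsq n v = 0 := by
    intro v hv
    refine Submodule.span_induction (p := fun w _ => PQsq n w = 0) ?_ ?_ ?_ ?_ hv
    · rintro w ⟨x, y, hx, hy, rfl⟩
      exact PQsq_kron_traceless n hn' x y hx hy
    · have := PQsq_smul n 0 0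
      simpa using this
    · intro a b _ _ ha hb
      rw [PQsq_add, ha, hb, add_zero]
    · intro a x _ hx
      rw [PQsq_smul, hx, smul_zero]
  refine ⟨?_, ?_, part3, part4, ?_, ?_⟩
  · intro m
    obtain ⟨x, y, hx, hy, h⟩ := part3 m
    rw [h, part4 x y hx hy]
  · intro a b
    rw [PQsq_adj]
  · intro m
    exact ⟨m.trace / (n:ℂ)^2, _, resid_mem n hn' m, by module⟩
  · intro c v hv
    dsimp only
    rw [sub_eq_self, PQsq_add, PQsq_smul, PQsq_one n hn', smul_zero, zero_add]
    exact pqzero v hv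
end
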